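/- Let A be a finite-dimensional vector space over a field F carrying a 3-Lie algebra structure [·,·,·], and let [·,·,·]_* be a 3-Lie algebra structure on A*. Define ad* : A × A → End(A*) by (ad*_{x,y}ξ)(z) = −ξ([x,y,z]) and aφ* : A* × A* → End(A) by ζ(aφ*_{α,β}x) = −([α,β,ζ]_*)(x) for all ζ ∈ A*. Then the bracket on A ⊕ A* given by [x1+ξ1, x2+ξ2, x3+ξ3] = [x1,x2,x3] + ad*_{x1,x2}ξ3 + ad*_{x3,x1}ξ2 + ad*_{x2,x3}ξ1 + aφ*_{ξ1,ξ2}x3 + aφ*_{ξ3,ξ1}x2 + aφ*_{ξ2,ξ3}x1 + [ξ1,ξ2,ξ3]_* satisfies the Filippov identity (i.e., A ⊕ A* is a 3-Lie algebra) if and only if (A, A*, ad*, aφ*) is a matched pair, that is: every ad*_{x,y} is a derivation of (A*,[·,·,·]_*), every aφ*_{α,β} is a derivation of (A,[·,·,·]), and for all x1,x2,x3 ∈ A, a1,a2,a3 ∈ A* the four compatibility identities hold: (1) ad_{x1,x2}(aφ*_{a1,a2}x3) − aφ*_{a1,a2}(ad_{x1,x2}x3) = aφ*_{ad*_{x1,x2}a1,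 a2}x3 + aφ*_{a1, ad*_{x1,x2}a2}x3; (2) ad^*-ad-compatibility on A*: ad^{(*)}_{a1,a2}(ad*_{x1,x2}a3) − ad*_{x1,x2}(ad^{(*)}_{a1,a2}a3) = ad*_{aφ*_{a1,a2}x1, x2}a3 + ad*_{x1, aφ*_{a1,a2}x2}a3, where ad^{(*)}_{a,b}c = [a,b,c]_*; (3) ad_{x1,x2}(aφ*_{a1,a2}x3) = aφ*_{ad*_{x1,x2}a1, a2}x3 − aφ*_{a1, ad*_{x3,x1}a2}x2 − aφ*_{a1, ad*_{x2,x3}a2}x1; (4) ad^{(*)}_{a1,a2}(ad*_{x1,x2}a3) = ad*_{aφ*_{a1,a2}x1, x2}a3 − ad*_{x1, aφ*_{a3,a1}x2}a2 − ad*_{x1, aφ*_{a2,a3}x2}a1, where ad_{x,y}z = [x,y,z]. -/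
import Mathlib


section Defs

variable {F : Type*} [Field F] {A : Type*} [AddCommGroup A] [Module F A]

/-- Total skew-symmetry of a trilinear bracket. -/
def IsAlt (br : A →ₗ[F] A →ₗ[F] A →ₗ[F] A) : Prop :=
  (∀ x z, br x x z = 0) ∧ (∀ x y, br x y y = 0) ∧ (∀ x y, br x y x = 0)

/-- The Filippov (fundamental) identity. -/
def Filippov (br : A →ₗ[F] A →ₗ[F] A →ₗ[F] A) : Prop :=
  ∀ x1 x2 x3 x4 x5,
    br x1 x2 (br x3 x4 x5) =
      br (br x1 x2 x3) x4 x5 + br x3 (br x1 x2 x4) x5 + br x3 x4 (br x1 x2 x5)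

/-- A 3-Lie algebra structure. -/
def Is3Lie (br : A →ₗ[F] A →ₗ[F] A →ₗ[F] A) : Prop := IsAlt br ∧ Filippov br

/-- The coadjoint action: `(coad br x y ξ) z = -ξ [x,y,z]`. -/
def coad (br : A →ₗ[F] A →ₗ[F] A →ₗ[F] A) (x y : A) :
    Module.Dual F A →ₗ[F] Module.Dual F A :=
  - (br x y).dualMap

/-- The bracket on `A ⊕ A*` built from the bracket `br` on `A`, the bracket
`brs` on `A*`, the coadjoint action of `A` on `A*`, and the coadjoint action
`aφ` of `A*` on `A`. -/
def dblBr (br : A →ₗ[F] A →ₗ[F] A →ₗ[F] A)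
    (brs : Module.Dual F A →ₗ[F] Module.Dual F A →ₗ[F]
      Module.Dual F A →ₗ[F] Module.Dual F A)
    (aφ : Module.Dual F A → Module.Dual F A → A → A) :
    A × Module.Dual F A → A × Module.Dual F A → A × Module.Dual F A →
      A × Module.Dual F A :=
  fun p q r =>
    (br p.1 q.1 r.1 + aφ p.2 q.2 r.1 + aφ r.2 p.2 q.1 + aφ q.2 r.2 p.1,
     brs p.2 q.2 r.2 + coad br p.1 q.1 r.2 + coad br r.1 p.1 q.2 +
       coad br q.1 r.1 p.2)

/-- The natural symmetric pairing `(x+ξ, y+η) = η(x) + ξ(y)` on `A ⊕ A*`. -/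
def dblForm : A × Module.Dual F A → A × Module.Dual F A → F :=
  fun p q => q.2 p.1 + p.2 q.1

/-- Filippov identity for an unbundled ternary operation. -/
def FilippovP {M : Type*} [AddCommGroup M] (m : M → M → M → M) : Prop :=
  ∀ x1 x2 x3 x4 x5,
    m x1 x2 (m x3 x4 x5) =
      m (m x1 x2 x3) x4 x5 + m x3 (m x1 x2 x4) x5 + m x3 x4 (m x1 x2 x5)

end Defs


set_option maxHeartbeats 8000000

/-- the bracket on `A ⊕ A*` satisfies the Filippov identity iff
`(A, A*, ad*, aφ*)` is a matched pair. -/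
theorem double_three_lie_iff_matched_pair
    {F A : Type*} [Field F] [AddCommGroup A] [Module F A] [FiniteDimensional F A]
    (br : A →ₗ[F] A →ₗ[F] A →ₗ[F] A) (h3 : Is3Lie br)
    (brs : Module.Dual F A →ₗ[F] Module.Dual F A →ₗ[F]
      Module.Dual F A →ₗ[F] Module.Dual F A) (h3s : Is3Lie brs)
    (aφ : Module.Dual F A → Module.Dual F A → A → A)
    (haφ : ∀ α β x (ζ : Module.Dual F A), ζ (aφ α β x) = -(brs α β ζ x)) :
    FilippovP (dblBr br brs aφ) ↔
      ((∀ x y a b c,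
        coad br x y (brs a b c) =
          brs (coad br x y a) b c + brs a (coad br x y b) c +
            brs a b (coad br x y c)) ∧
      (∀ (α β : Module.Dual F A) x y z,
        aφ α β (br x y z) =
          br (aφ α β x) y z + br x (aφ α β y) z + br x y (aφ α β z)) ∧
      (∀ x1 x2 x3 a1 a2,
        br x1 x2 (aφ a1 a2 x3) - aφ a1 a2 (br x1 x2 x3) =
          aφ (coad br x1 x2 a1) a2 x3 + aφ a1 (coad br x1 x2 a2) x3) ∧
      (∀ a1 a2 a3 x1 x2,
        brs a1 a2 (coad br x1 x2 a3) - coad br x1 x2 (brs a1 a2 a3) =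
          coad br (aφ a1 a2 x1) x2 a3 + coad br x1 (aφ a1 a2 x2) a3) ∧
      (∀ x1 x2 x3 a1 a2,
        br x1 x2 (aφ a1 a2 x3) =
          aφ (coad br x1 x2 a1) a2 x3 - aφ a1 (coad br x3 x1 a2) x2 -
            aφ a1 (coad br x2 x3 a2) x1) ∧
      (∀ x1 x2 a1 a2 a3,
        brs a1 a2 (coad br x1 x2 a3) =
          coad br (aφ a1 a2 x1) x2 a3 - coad br x1 (aφ a3 a1 x2) a2 -
            coad br x1 (aφ a2 a3 x2) a1)) := by

  obtain ⟨⟨ha1, ha2, ha3⟩, hF⟩ := h3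
  obtain ⟨⟨hs1, hs2, hs3⟩, hFs⟩ := h3s
  have hco : ∀ (x y : A) (s : Module.Dual F A) (z : A),
      coad br x y s z = -(s (br x y z)) := by
    intro x y s z
    simp [coad, LinearMap.neg_apply, LinearMap.dualMap_apply]
  have hbr12 : ∀ x y z, br y x z = - br x y z := by
    intro x y z
    have h := ha1 (x + y) z
    simp only [map_add, LinearMap.add_apply, ha1, zero_add, add_zero] at h
    linear_combination (norm := abel) h
  have hbr23 : ∀ x y z, br x z y = - br x y z := by
    intro x y z
    have h := ha2 x (y + z)
    simp only [map_add, LinearMap.add_apply, ha2, zero_add, add_zero] at h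
    linear_combination (norm := abel) h
  have hbr13 : ∀ x y z, br z y x = - br x y z := by
    intro x y z
    have h := ha3 (x + z) y
    simp only [map_add, LinearMap.add_apply, ha3, zero_add, add_zero] at h
    linear_combination (norm := abel) h
  have hbs12 : ∀ a b c, brs b a c = - brs a b c := by
    intro a b c
    have h := hs1 (a + b) c
    simp only [map_add, LinearMap.add_apply, hs1, zero_add, add_zero] at h
    linear_combination (norm := abel) h
  have hbs23 : ∀ a b c, brs a c b = - brs a b c := by
    intro a b c
    have h := hs2 a (b + c)
    simp only [map_add, LinearMap.add_apply, hs2, zero_add, add_zero] at h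
    linear_combination (norm := abel) h
  have hbs13 : ∀ a b c, brs c b a = - brs a b c := by
    intro a b c
    have h := hs3 (a + c) b
    simp only [map_add, LinearMap.add_apply, hs3, zero_add, add_zero] at h
    linear_combination (norm := abel) h
  -- scalar corrections for br under a functional
  have cb12 : ∀ (w : Module.Dual F A) (a b c : A), w (br b a c) = -(w (br a b c)) := by
    intro w a b c; rw [hbr12]; exact map_neg w _
  have cb23 : ∀ (w : Module.Dual F A) (a b c : A), w (br a c b) = -(w (br a b c)) := by
    intro w a b c; rw [hbr23]; exact map_neg w _
  have cb13 : ∀ (w : Module.Dual F A) (a b c : A), w (br c b a) = -(w (br a b c)) := by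
    intro w a b c; rw [hbr13]; exact map_neg w _
  have cbc1 : ∀ (w : Module.Dual F A) (a b c : A), w (br c a b) = w (br a b c) := by
    intro w a b c; rw [hbr12, hbr23, neg_neg]
  have cbc2 : ∀ (w : Module.Dual F A) (a b c : A), w (br b c a) = w (br a b c) := by
    intro w a b c; rw [hbr12, hbr13, neg_neg]
  -- scalar corrections for brs applied at a vector
  have cs12 : ∀ (a b c : Module.Dual F A) (v : A), brs b a c v = -(brs a b c v) := by
    intro a b c v; rw [hbs12]; exact LinearMap.neg_apply _ _
  have cs23 : ∀ (a b c : Module.Dual F A) (v : A), brs a c b v = -(brs a b c v) := by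
    intro a b c v; rw [hbs23]; exact LinearMap.neg_apply _ _
  have cs13 : ∀ (a b c : Module.Dual F A) (v : A), brs c b a v = -(brs a b c v) := by
    intro a b c v; rw [hbs13]; exact LinearMap.neg_apply _ _
  have csc1 : ∀ (a b c : Module.Dual F A) (v : A), brs c a b v = brs a b c v := by
    intro a b c v; rw [hbs12, hbs23, neg_neg]
  have csc2 : ∀ (a b c : Module.Dual F A) (v : A), brs b c a v = brs a b c v := by
    intro a b c v; rw [hbs12, hbs13, neg_neg]
  have hbneg3 : ∀ (u v w : A), br u v (-w) = -(br u v w) := by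
    intro u v w; rw [← neg_one_smul F w, map_smul]; exact neg_one_smul F (br u v w)
  have hsneg1 : ∀ (u a b : Module.Dual F A), brs (-u) a b = -(brs u a b) := by
    intro u a b; rw [← neg_one_smul F u, map_smul, LinearMap.smul_apply, LinearMap.smul_apply]; exact neg_one_smul F _
  have hsneg2 : ∀ (a u b : Module.Dual F A), brs a (-u) b = -(brs a u b) := by
    intro a u b; rw [← neg_one_smul F u, map_smul, LinearMap.smul_apply]; exact neg_one_smul F _
  have hsneg3 : ∀ (a b u : Module.Dual F A), brs a b (-u) = -(brs a b u) := by
    intro a b u; rw [← neg_one_smul F u, map_smul]; exact neg_one_smul F (brs a b u)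
  have coadswap : ∀ (p q : A) (s : Module.Dual F A), coad br q p s = - coad br p q s := by
    intro p q s
    refine LinearMap.ext fun z => ?_
    rw [LinearMap.neg_apply, hco, hco, hbr12, map_neg, neg_neg]
  have hdual : ∀ {v w : A}, (∀ ζ : Module.Dual F A, ζ v = ζ w) → v = w := by
    intro v w h
    refine sub_eq_zero.mp ((Module.forall_dual_apply_eq_zero_iff F _).mp fun ζ => ?_)
    rw [map_sub, sub_eq_zero]; exact h ζ
  have aφswap : ∀ (a b : Module.Dual F A) (x : A), aφ b a x = - aφ a b x := by
    intro a b x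
    refine hdual fun ζ => ?_
    rw [haφ, map_neg, haφ, hbs12, LinearMap.neg_apply, neg_neg]
  -- nested corrections
  have ccoad1 : ∀ (p q : A) (s a b : Module.Dual F A) (v : A),
      brs (coad br q p s) a b v = -(brs (coad br p q s) a b v) := by
    intro p q s a b v; rw [coadswap, hsneg1, LinearMap.neg_apply]
  have ccoad2 : ∀ (p q : A) (s a b : Module.Dual F A) (v : A),
      brs a (coad br q p s) b v = -(brs a (coad br p q s) b v) := by
    intro p q s a b v; rw [coadswap, hsneg2, LinearMap.neg_apply]
  have ccoad3 : ∀ (p q : A) (s a b : Module.Dual F A) (v : A),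
      brs a b (coad br q p s) v = -(brs a b (coad br p q s) v) := by
    intro p q s a b v; rw [coadswap, hsneg3, LinearMap.neg_apply]
  have caφ1 : ∀ (w : Module.Dual F A) (a b : Module.Dual F A) (x u v : A),
      w (br (aφ b a x) u v) = -(w (br (aφ a b x) u v)) := by
    intro w a b x u v
    rw [aφswap, ← neg_one_smul F (aφ a b x), map_smul, LinearMap.smul_apply,
      LinearMap.smul_apply, map_smul, neg_one_smul]
  have caφ2 : ∀ (w : Module.Dual F A) (a b : Module.Dual F A) (x u v : A),
      w (br u (aφ b a x) v) = -(w (br u (aφ a b x) v)) := by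
    intro w a b x u v
    rw [aφswap, ← neg_one_smul F (aφ a b x), map_smul, LinearMap.smul_apply,
      map_smul, neg_one_smul]
  have caφ3 : ∀ (w : Module.Dual F A) (a b : Module.Dual F A) (x u v : A),
      w (br u v (aφ b a x)) = -(w (br u v (aφ a b x))) := by
    intro w a b x u v
    rw [aφswap, hbneg3, map_neg]
  have hbrc1 : ∀ (a b c : A), br c a b = br a b c := by
    intro a b c; rw [hbr12 a c b, hbr23 a b c, neg_neg]
  have hbrc2 : ∀ (a b c : A), br b c a = br a b c := by
    intro a b c; rw [hbr12 c b a, hbr13 a b c, neg_neg]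
  have hbsc1 : ∀ (a b c : Module.Dual F A), brs c a b = brs a b c := by
    intro a b c; rw [hbs12 a c b, hbs23 a b c, neg_neg]
  have hbsc2 : ∀ (a b c : Module.Dual F A), brs b c a = brs a b c := by
    intro a b c; rw [hbs12 c b a, hbs13 a b c, neg_neg]
  have hbneg1 : ∀ (t u v : A), br (-t) u v = -(br t u v) := by
    intro t u v
    rw [← neg_one_smul F t, map_smul, LinearMap.smul_apply, LinearMap.smul_apply]
    exact neg_one_smul F _
  have hbneg2 : ∀ (u t v : A), br u (-t) v = -(br u t v) := by
    intro u t v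
    rw [← neg_one_smul F t, map_smul, LinearMap.smul_apply]
    exact neg_one_smul F _
  have cbrin112 : ∀ (w : Module.Dual F A) (a b c u v : A), w (br (br b a c) u v) = -(w (br (br a b c) u v)) := by
    intro w a b c u v; rw [hbr12 a b c, hbneg1, map_neg]
  have cbrin123 : ∀ (w : Module.Dual F A) (a b c u v : A), w (br (br a c b) u v) = -(w (br (br a b c) u v)) := by
    intro w a b c u v; rw [hbr23 a b c, hbneg1, map_neg]
  have cbrin113 : ∀ (w : Module.Dual F A) (a b c u v : A), w (br (br c b a) u v) = -(w (br (br a b c) u v)) := by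
    intro w a b c u v; rw [hbr13 a b c, hbneg1, map_neg]
  have cbrin1c1 : ∀ (w : Module.Dual F A) (a b c u v : A), w (br (br c a b) u v) = w (br (br a b c) u v) := by
    intro w a b c u v; rw [hbrc1 a b c]
  have cbrin1c2 : ∀ (w : Module.Dual F A) (a b c u v : A), w (br (br b c a) u v) = w (br (br a b c) u v) := by
    intro w a b c u v; rw [hbrc2 a b c]
  have cbrin212 : ∀ (w : Module.Dual F A) (a b c u v : A), w (br u (br b a c) v) = -(w (br u (br a b c) v)) := by
    intro w a b c u v; rw [hbr12 a b c, hbneg2, map_neg]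
  have cbrin223 : ∀ (w : Module.Dual F A) (a b c u v : A), w (br u (br a c b) v) = -(w (br u (br a b c) v)) := by
    intro w a b c u v; rw [hbr23 a b c, hbneg2, map_neg]
  have cbrin213 : ∀ (w : Module.Dual F A) (a b c u v : A), w (br u (br c b a) v) = -(w (br u (br a b c) v)) := by
    intro w a b c u v; rw [hbr13 a b c, hbneg2, map_neg]
  have cbrin2c1 : ∀ (w : Module.Dual F A) (a b c u v : A), w (br u (br c a b) v) = w (br u (br a b c) v) := by
    intro w a b c u v; rw [hbrc1 a b c]
  have cbrin2c2 : ∀ (w : Module.Dual F A) (a b c u v : A), w (br u (br b c a) v) = w (br u (br a b c) v) := by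
    intro w a b c u v; rw [hbrc2 a b c]
  have cbrin312 : ∀ (w : Module.Dual F A) (a b c u v : A), w (br u v (br b a c)) = -(w (br u v (br a b c))) := by
    intro w a b c u v; rw [hbr12 a b c, hbneg3, map_neg]
  have cbrin323 : ∀ (w : Module.Dual F A) (a b c u v : A), w (br u v (br a c b)) = -(w (br u v (br a b c))) := by
    intro w a b c u v; rw [hbr23 a b c, hbneg3, map_neg]
  have cbrin313 : ∀ (w : Module.Dual F A) (a b c u v : A), w (br u v (br c b a)) = -(w (br u v (br a b c))) := by
    intro w a b c u v; rw [hbr13 a b c, hbneg3, map_neg]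
  have cbrin3c1 : ∀ (w : Module.Dual F A) (a b c u v : A), w (br u v (br c a b)) = w (br u v (br a b c)) := by
    intro w a b c u v; rw [hbrc1 a b c]
  have cbrin3c2 : ∀ (w : Module.Dual F A) (a b c u v : A), w (br u v (br b c a)) = w (br u v (br a b c)) := by
    intro w a b c u v; rw [hbrc2 a b c]
  have cbsin112 : ∀ (a b c u v : Module.Dual F A) (z0 : A), (brs (brs b a c) u v) z0 = -((brs (brs a b c) u v) z0) := by
    intro a b c u v z0; rw [hbs12 a b c, hsneg1, LinearMap.neg_apply]
  have cbsin123 : ∀ (a b c u v : Module.Dual F A) (z0 : A), (brs (brs a c b) u v) z0 = -((brs (brs a b c) u v) z0) := by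
    intro a b c u v z0; rw [hbs23 a b c, hsneg1, LinearMap.neg_apply]
  have cbsin113 : ∀ (a b c u v : Module.Dual F A) (z0 : A), (brs (brs c b a) u v) z0 = -((brs (brs a b c) u v) z0) := by
    intro a b c u v z0; rw [hbs13 a b c, hsneg1, LinearMap.neg_apply]
  have cbsin1c1 : ∀ (a b c u v : Module.Dual F A) (z0 : A), (brs (brs c a b) u v) z0 = (brs (brs a b c) u v) z0 := by
    intro a b c u v z0; rw [hbsc1 a b c]
  have cbsin1c2 : ∀ (a b c u v : Module.Dual F A) (z0 : A), (brs (brs b c a) u v) z0 = (brs (brs a b c) u v) z0 := by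
    intro a b c u v z0; rw [hbsc2 a b c]
  have cbsin212 : ∀ (a b c u v : Module.Dual F A) (z0 : A), (brs u (brs b a c) v) z0 = -((brs u (brs a b c) v) z0) := by
    intro a b c u v z0; rw [hbs12 a b c, hsneg2, LinearMap.neg_apply]
  have cbsin223 : ∀ (a b c u v : Module.Dual F A) (z0 : A), (brs u (brs a c b) v) z0 = -((brs u (brs a b c) v) z0) := by
    intro a b c u v z0; rw [hbs23 a b c, hsneg2, LinearMap.neg_apply]
  have cbsin213 : ∀ (a b c u v : Module.Dual F A) (z0 : A), (brs u (brs c b a) v) z0 = -((brs u (brs a b c) v) z0) := by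
    intro a b c u v z0; rw [hbs13 a b c, hsneg2, LinearMap.neg_apply]
  have cbsin2c1 : ∀ (a b c u v : Module.Dual F A) (z0 : A), (brs u (brs c a b) v) z0 = (brs u (brs a b c) v) z0 := by
    intro a b c u v z0; rw [hbsc1 a b c]
  have cbsin2c2 : ∀ (a b c u v : Module.Dual F A) (z0 : A), (brs u (brs b c a) v) z0 = (brs u (brs a b c) v) z0 := by
    intro a b c u v z0; rw [hbsc2 a b c]
  have cbsin312 : ∀ (a b c u v : Module.Dual F A) (z0 : A), (brs u v (brs b a c)) z0 = -((brs u v (brs a b c)) z0) := by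
    intro a b c u v z0; rw [hbs12 a b c, hsneg3, LinearMap.neg_apply]
  have cbsin323 : ∀ (a b c u v : Module.Dual F A) (z0 : A), (brs u v (brs a c b)) z0 = -((brs u v (brs a b c)) z0) := by
    intro a b c u v z0; rw [hbs23 a b c, hsneg3, LinearMap.neg_apply]
  have cbsin313 : ∀ (a b c u v : Module.Dual F A) (z0 : A), (brs u v (brs c b a)) z0 = -((brs u v (brs a b c)) z0) := by
    intro a b c u v z0; rw [hbs13 a b c, hsneg3, LinearMap.neg_apply]
  have cbsin3c1 : ∀ (a b c u v : Module.Dual F A) (z0 : A), (brs u v (brs c a b)) z0 = (brs u v (brs a b c)) z0 := by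
    intro a b c u v z0; rw [hbsc1 a b c]
  have cbsin3c2 : ∀ (a b c u v : Module.Dual F A) (z0 : A), (brs u v (brs b c a)) z0 = (brs u v (brs a b c)) z0 := by
    intro a b c u v z0; rw [hbsc2 a b c]
  have haφz1 : ∀ (b : Module.Dual F A) (x : A), aφ 0 b x = 0 := by
    intro b x
    refine hdual fun ζ => ?_
    rw [haφ]; simp
  have haφz2 : ∀ (a : Module.Dual F A) (x : A), aφ a 0 x = 0 := by
    intro a x
    refine hdual fun ζ => ?_
    rw [haφ]; simp
  have haφz3 : ∀ (a b : Module.Dual F A), aφ a b 0 = 0 := by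
    intro a b
    refine hdual fun ζ => ?_
    rw [haφ]; simp
  have hco0a : ∀ (y : A) (s : Module.Dual F A), coad br 0 y s = 0 := by
    intro y s
    refine LinearMap.ext fun z => ?_
    rw [hco]; simp
  have hco0b : ∀ (x : A) (s : Module.Dual F A), coad br x 0 s = 0 := by
    intro x s
    refine LinearMap.ext fun z => ?_
    rw [hco]; simp
  constructor
  · intro hFil
    refine ⟨?_, ?_, ?_, ?_, ?_, ?_⟩
    · intro x y a b c
      refine LinearMap.ext fun z => ?_
      have H1 := LinearMap.congr_fun (congrArg Prod.snd
        (hFil (x, 0) (y, 0) (0, a) (0, b) (0, c))) z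
      simp only [dblBr, Prod.fst_add, Prod.snd_add, hco, haφ, haφz1, haφz2, haφz3, hco0a, hco0b, zero_add, add_zero, neg_zero, map_add, map_sub, map_neg, map_zero, LinearMap.add_apply, LinearMap.sub_apply, LinearMap.neg_apply, LinearMap.zero_apply, neg_neg] at H1 ⊢
      linear_combination H1
    · intro α β x y z
      refine hdual fun ζ => ?_
      have H1 := congrArg (fun t => ζ t.1) (hFil (0, α) (0, β) (x, 0) (y, 0) (z, 0))
      simp only [dblBr, Prod.fst_add, Prod.snd_add, hco, haφ, haφz1, haφz2, haφz3, hco0a, hco0b, zero_add, add_zero, neg_zero, map_add, map_sub, map_neg, map_zero, LinearMap.add_apply, LinearMap.sub_apply, LinearMap.neg_apply, LinearMap.zero_apply, neg_neg] at H1 ⊢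
      linear_combination H1
    · intro x1 x2 x3 a1 a2
      refine hdual fun ζ => ?_
      have H1 := congrArg (fun t => ζ t.1) (hFil (x1, 0) (x2, 0) (0, a1) (0, a2) (x3, 0))
      simp only [dblBr, Prod.fst_add, Prod.snd_add, hco, haφ, haφz1, haφz2, haφz3, hco0a, hco0b, zero_add, add_zero, neg_zero, map_add, map_sub, map_neg, map_zero, LinearMap.add_apply, LinearMap.sub_apply, LinearMap.neg_apply, LinearMap.zero_apply, neg_neg] at H1 ⊢
      linear_combination H1
    · intro a1 a2 a3 x1 x2
      refine LinearMap.ext fun z => ?_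
      have H1 := LinearMap.congr_fun (congrArg Prod.snd
        (hFil (0, a1) (0, a2) (x1, 0) (x2, 0) (0, a3))) z
      simp only [dblBr, Prod.fst_add, Prod.snd_add, hco, haφ, haφz1, haφz2, haφz3, hco0a, hco0b, zero_add, add_zero, neg_zero, map_add, map_sub, map_neg, map_zero, LinearMap.add_apply, LinearMap.sub_apply, LinearMap.neg_apply, LinearMap.zero_apply, neg_neg] at H1 ⊢
      linear_combination H1
    · intro x1 x2 x3 a1 a2
      refine hdual fun ζ => ?_
      have H1 := congrArg (fun t => ζ t.1) (hFil (x3, 0) (0, a2) (x1, 0) (x2, 0) (0, a1))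
      have H2 := congrArg (fun t => ζ t.1) (hFil (x1, 0) (x2, 0) (0, a1) (0, a2) (x3, 0))
      simp only [dblBr, Prod.fst_add, Prod.snd_add, hco, haφ, haφz1, haφz2, haφz3, hco0a, hco0b, zero_add, add_zero, neg_zero, map_add, map_sub, map_neg, map_zero, LinearMap.add_apply, LinearMap.sub_apply, LinearMap.neg_apply, LinearMap.zero_apply, neg_neg] at H1 H2 ⊢
      linear_combination H1 + (cs12 a2 (coad br x1 x2 a1) ζ x3) - (cs12 a1 (coad br x2 x3 a2) ζ x1) - (ccoad2 x1 x3 a2 a1 ζ x2) + (caφ3 ζ a1 a2 x3 x1 x2)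
    · intro x1 x2 a1 a2 a3
      refine LinearMap.ext fun z => ?_
      have H1 := LinearMap.congr_fun (congrArg Prod.snd
        (hFil (0, a3) (x2, 0) (0, a1) (0, a2) (x1, 0))) z
      have H2 := LinearMap.congr_fun (congrArg Prod.snd
        (hFil (0, a1) (0, a2) (x1, 0) (x2, 0) (0, a3))) z
      simp only [dblBr, Prod.fst_add, Prod.snd_add, hco, haφ, haφz1, haφz2, haφz3, hco0a, hco0b, zero_add, add_zero, neg_zero, map_add, map_sub, map_neg, map_zero, LinearMap.add_apply, LinearMap.sub_apply, LinearMap.neg_apply, LinearMap.zero_apply, neg_neg] at H1 H2 ⊢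
      linear_combination H1 - (cb12 a1 (aφ a2 a3 x2) x1 z) - (caφ2 a2 a1 a3 x2 x1 z) + (cb12 a3 (aφ a1 a2 x1) x2 z) + (ccoad3 x1 x2 a3 a1 a2 z)
  · rintro ⟨hCa, hCb, hC3, hC4, hC5, hC6⟩
    rintro ⟨x1, s1⟩ ⟨x2, s2⟩ ⟨x3, s3⟩ ⟨x4, s4⟩ ⟨x5, s5⟩
    refine Prod.ext ?_ ?_
    · refine hdual fun ζ => ?_
      have A1 := congrArg (fun t => ζ t) (hF x1 x2 x3 x4 x5)
      have A2 := congrArg (fun t => ζ t) (hCb s1 s2 x3 x4 x5)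
      have A3 := congrArg (fun t => ζ t) (hC3 x1 x2 x5 s3 s4)
      have A4 := congrArg (fun t => ζ t) (hC3 x1 x2 x4 s5 s3)
      have A5 := congrArg (fun t => ζ t) (hC3 x1 x2 x3 s4 s5)
      have A6 := congrArg (fun t => ζ t) (hC3 x5 x1 x4 s2 s3)
      have A7 := congrArg (fun t => ζ t) (hC3 x5 x1 x4 s3 s2)
      have A8 := congrArg (fun t => ζ t) (hC3 x3 x1 x5 s2 s4)
      have A9 := congrArg (fun t => ζ t) (hC3 x3 x1 x5 s4 s2)
      have A10 := congrArg (fun t => ζ t) (hC3 x4 x1 x3 s2 s5)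
      have A11 := congrArg (fun t => ζ t) (hC3 x4 x1 x3 s5 s2)
      have A12 := congrArg (fun t => ζ t) (hC5 x4 x5 x2 s3 s1)
      have A13 := congrArg (fun t => ζ t) (hC5 x5 x3 x2 s4 s1)
      have A14 := congrArg (fun t => ζ t) (hC5 x3 x4 x2 s5 s1)
      have A15 := congrArg (fun t => ζ t) (hC5 x4 x5 x1 s2 s3)
      have A16 := congrArg (fun t => ζ t) (hC5 x5 x1 x4 s2 s3)
      have A17 := congrArg (fun t => ζ t) (hC5 x5 x1 x4 s3 s2)
      have A18 := congrArg (fun t => ζ t) (hC5 x5 x3 x1 s2 s4)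
      have A19 := congrArg (fun t => ζ t) (hC5 x3 x1 x5 s2 s4)
      have A20 := congrArg (fun t => ζ t) (hC5 x3 x1 x5 s4 s2)
      have A21 := congrArg (fun t => ζ t) (hC5 x3 x4 x1 s2 s5)
      have A22 := congrArg (fun t => ζ t) (hC5 x4 x1 x3 s2 s5)
      have A23 := congrArg (fun t => ζ t) (hC5 x4 x1 x3 s5 s2)
      have A24 := LinearMap.congr_fun (hFs s1 s2 s3 s4 ζ) x5
      have A25 := LinearMap.congr_fun (hFs s1 s2 s5 s3 ζ) x4
      have A26 := LinearMap.congr_fun (hFs s1 s2 s4 s5 ζ) x3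
      have A27 := LinearMap.congr_fun (hFs s2 s3 s4 s5 ζ) x1
      have A28 := LinearMap.congr_fun (hFs s2 s4 s3 s5 ζ) x1
      have A29 := LinearMap.congr_fun (hFs s2 s5 s3 s4 ζ) x1
      have A30 := LinearMap.congr_fun (hFs s2 ζ s3 s4 s5) x1
      have A31 := LinearMap.congr_fun (hFs s3 s4 s2 s5 ζ) x1
      have A32 := LinearMap.congr_fun (hFs s1 s3 s4 s5 ζ) x2
      have A33 := LinearMap.congr_fun (hFs s1 s4 s3 s5 ζ) x2
      have A34 := LinearMap.congr_fun (hFs s1 s5 s3 s4 ζ) x2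
      have A35 := LinearMap.congr_fun (hFs s1 ζ s3 s4 s5) x2
      have A36 := LinearMap.congr_fun (hFs s3 s4 s1 s5 ζ) x2
      simp only [dblBr, Prod.fst_add, Prod.snd_add, hco, haφ, haφz1, haφz2, haφz3, hco0a, hco0b, zero_add, add_zero, neg_zero, map_add, map_sub, map_neg, map_zero, LinearMap.add_apply, LinearMap.sub_apply, LinearMap.neg_apply, LinearMap.zero_apply, neg_neg] at A1 A2 A3 A4 A5 A6 A7 A8 A9 A10 A11 A12 A13 A14 A15 A16 A17 A18 A19 A20 A21 A22 A23 A24 A25 A26 A27 A28 A29 A30 A31 A32 A33 A34 A35 A36 ⊢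
      linear_combination A1 + A2 + A3 + A4 + A5 - A6 - A7 - A8 - A9 - A10 - A11 - A12 - A13 - A14 - A15 + A16 + A17 - A18 + A19 + A20 - A21 + A22 + A23 - A24 - A25 - A26 - A27 + A28 + A29 - A30 + 2 * A31 + A32 - A33 - A34 + A35 - 2 * A36 - (cbsin123 s1 s3 s4 s5 ζ x2) - 2 * (cbsin1c2 s1 s3 s4 s5 ζ x2) - (cbsin123 s1 s3 s5 s4 ζ x2) + (cs12 (brs s1 s3 s5) s4 ζ x2) + (cbsin123 s1 s3 ζ s4 s5 x2) + (csc2 (brs s1 s3 ζ) s4 s5 x2) + (cbsin123 s2 s3 s4 s5 ζ x1) + 2 * (cbsin1c2 s2 s3 s4 s5 ζ x1) + (cbsin123 s2 s3 s5 s4 ζ x1) - (cs12 (brs s2 s3 s5) s4 ζ x1) - (cbsin123 s2 s3 ζ s4 s5 x1) - (csc2 (brs s2 s3 ζ) s4 s5 x1) - 2 * (cs12 (brs s3 s4 s5) s1 ζ x2) - (csc2 (brs s3 s4 s5) s1 ζ x2) - (ccoad2 x2 x3 s1 s4 ζ x5) + (cs12 (coad br x2 x3 s1) s4 ζ x5)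 - (ccoad2 x2 x4 s1 s5 ζ x3) + (cs12 (coad br x2 x4 s1) s5 ζ x3) - (ccoad2 x2 x5 s1 s3 ζ x4) + (cs12 (coad br x2 x5 s1) s3 ζ x4) + (ccoad1 x1 x3 s2 s4 ζ x5) + (ccoad2 x1 x3 s2 s4 ζ x5) - (cs12 (coad br x1 x3 s2) s4 ζ x5) + (cs12 (coad br x3 x4 s2) s5 ζ x1) + (ccoad1 x1 x4 s2 s5 ζ x3) + (ccoad2 x1 x4 s2 s5 ζ x3) - (cs12 (coad br x1 x4 s2) s5 ζ x3) + (cs12 (coad br x4 x5 s2) s3 ζ x1) + (ccoad1 x1 x5 s2 s3 ζ x4) + (ccoad2 x1 x5 s2 s3 ζ x4) - (cs12 (coad br x1 x5 s2) s3 ζ x4) + (ccoad1 x3 x5 s2 s4 ζ x1) + (ccoad2 x3 x5 s2 s4 ζ x1) - (cs12 (coad br x3 x5 s2) s4 ζ x1) - (csc2 (brs s4 s5 ζ) s1 s3 x2) - (cs13 (brs s4 s5 ζ) s1 s3 x2) + (csc2 (brs s3 s5 ζ) s1 s4 x2) - (cbsin312 s3 s5 ζ s4 s1 x2) + (cs13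 (brs s3 s5 ζ) s1 s4 x2) - (csc2 (brs s3 s4 ζ) s1 s5 x2) - (cs13 (brs s3 s4 ζ) s1 s5 x2) + (cs12 (brs s3 s4 s5) s2 ζ x1) + (csc2 (brs s3 s4 s5) s2 ζ x1) + (cbc1 (brs s2 s3 ζ) x1 x4 x5) + (cbc1 (brs s3 s2 ζ) x1 x4 x5) + (cs12 s2 s3 ζ (br x1 x4 x5)) - (cbsin312 s3 s5 ζ s2 s4 x1) + (cb12 (brs s2 s4 ζ) x1 x3 x5) + (cb12 (brs s4 s2 ζ) x1 x3 x5) - (cs12 s2 s4 ζ (br x1 x3 x5)) + (cbc1 (brs s2 s5 ζ) x1 x3 x4) + (cbc1 (brs s5 s2 ζ) x1 x3 x4) + (cs12 s2 s5 ζ (br x1 x3 x4)) - (cbsin223 s1 s4 s5 s3 ζ x2) + (cbsin223 s1 s4 ζ s3 s5 x2) - (cs12 (brs s1 s4 ζ) s3 s5 x2) - (csc2 (brs s1 s4 ζ) s3 s5 x2) + (cbsin223 s2 s4 s5 s3 ζ x1) - (cbsin223 s2 s4 ζ s3 s5 x1) + (cs12 (brs s2 s4 ζ) s3 s5 x1)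 + (csc2 (brs s2 s4 ζ) s3 s5 x1) + (ccoad2 x1 x4 s2 s3 ζ x5) + (cbsin323 s1 s5 ζ s3 s4 x2) - (cbsin323 s2 s5 ζ s3 s4 x1) + (ccoad2 x1 x5 s2 s4 ζ x3) + (ccoad2 x1 x3 s2 s5 ζ x4) + (cbc2 ζ (aφ s2 s3 x1) x4 x5) - (caφ1 ζ s1 s3 x2 x4 x5) + (caφ3 ζ s1 s3 x2 x4 x5) - (cbc2 ζ (aφ s1 s3 x2) x4 x5) - (cb12 ζ (aφ s2 s4 x1) x3 x5) + (cb13 ζ (aφ s2 s4 x1) x3 x5) - (caφ2 ζ s1 s4 x2 x3 x5) + (cb12 ζ (aφ s1 s4 x2) x3 x5) + (caφ3 ζ s1 s4 x2 x5 x3) - (cb13 ζ (aφ s1 s4 x2) x3 x5)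
    · refine LinearMap.ext fun z => ?_
      have B1 := LinearMap.congr_fun (hFs s1 s2 s3 s4 s5) z
      have B2 := LinearMap.congr_fun (hCa x1 x2 s3 s4 s5) z
      have B3 := LinearMap.congr_fun (hC4 s1 s2 s5 x3 x4) z
      have B4 := LinearMap.congr_fun (hC4 s1 s2 s4 x5 x3) z
      have B5 := LinearMap.congr_fun (hC4 s1 s2 s3 x4 x5) z
      have B6 := LinearMap.congr_fun (hC4 s5 s1 s4 x2 x3) z
      have B7 := LinearMap.congr_fun (hC4 s5 s1 s4 x3 x2) z
      have B8 := LinearMap.congr_fun (hC4 s3 s1 s5 x2 x4) z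
      have B9 := LinearMap.congr_fun (hC4 s3 s1 s5 x4 x2) z
      have B10 := LinearMap.congr_fun (hC4 s4 s1 s3 x2 x5) z
      have B11 := LinearMap.congr_fun (hC4 s4 s1 s3 x5 x2) z
      have B12 := LinearMap.congr_fun (hC6 x3 x1 s4 s5 s2) z
      have B13 := LinearMap.congr_fun (hC6 x4 x1 s5 s3 s2) z
      have B14 := LinearMap.congr_fun (hC6 x5 x1 s3 s4 s2) z
      have B15 := LinearMap.congr_fun (hC6 x2 x3 s4 s5 s1) z
      have B16 := LinearMap.congr_fun (hC6 x2 x3 s5 s1 s4) z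
      have B17 := LinearMap.congr_fun (hC6 x3 x2 s5 s1 s4) z
      have B18 := LinearMap.congr_fun (hC6 x2 x4 s5 s3 s1) z
      have B19 := LinearMap.congr_fun (hC6 x2 x4 s3 s1 s5) z
      have B20 := LinearMap.congr_fun (hC6 x4 x2 s3 s1 s5) z
      have B21 := LinearMap.congr_fun (hC6 x2 x5 s3 s4 s1) z
      have B22 := LinearMap.congr_fun (hC6 x2 x5 s4 s1 s3) z
      have B23 := LinearMap.congr_fun (hC6 x5 x2 s4 s1 s3) z
      have B24 := congrArg (fun t => s5 t) (hF x1 x2 x3 x4 z)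
      have B25 := congrArg (fun t => s4 t) (hF x1 x2 x5 x3 z)
      have B26 := congrArg (fun t => s3 t) (hF x1 x2 x4 x5 z)
      have B27 := congrArg (fun t => s1 t) (hF x2 x3 x4 x5 z)
      have B28 := congrArg (fun t => s1 t) (hF x2 x4 x3 x5 z)
      have B29 := congrArg (fun t => s1 t) (hF x2 x5 x3 x4 z)
      have B30 := congrArg (fun t => s1 t) (hF x2 z x3 x4 x5)
      have B31 := congrArg (fun t => s1 t) (hF x3 x4 x2 x5 z)
      have B32 := congrArg (fun t => s2 t) (hF x1 x3 x4 x5 z)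
      have B33 := congrArg (fun t => s2 t) (hF x1 x4 x3 x5 z)
      have B34 := congrArg (fun t => s2 t) (hF x1 x5 x3 x4 z)
      have B35 := congrArg (fun t => s2 t) (hF x1 z x3 x4 x5)
      have B36 := congrArg (fun t => s2 t) (hF x3 x4 x1 x5 z)
      simp only [dblBr, Prod.fst_add, Prod.snd_add, hco, haφ, haφz1, haφz2, haφz3, hco0a, hco0b, zero_add, add_zero, neg_zero, map_add, map_sub, map_neg, map_zero, LinearMap.add_apply, LinearMap.sub_apply, LinearMap.neg_apply, LinearMap.zero_apply, neg_neg] at B1 B2 B3 B4 B5 B6 B7 B8 B9 B10 B11 B12 B13 B14 B15 B16 B17 B18 B19 B20 B21 B22 B23 B24 B25 B26 B27 B28 B29 B30 B31 B32 B33 B34 B35 B36 ⊢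
      linear_combination B1 + B2 + B3 + B4 + B5 - B6 - B7 - B8 - B9 - B10 - B11 - B12 - B13 - B14 - B15 + B16 + B17 - B18 + B19 + B20 - B21 + B22 + B23 - B24 - B25 - B26 - B27 + B28 + B29 - B30 + 2 * B31 + B32 - B33 - B34 + B35 - 2 * B36 + (csc2 (coad br x2 x3 s1) s4 s5 z) - (ccoad1 x1 x3 s2 s4 s5 z) + (ccoad3 x1 x3 s2 s4 s5 z) - (csc2 (coad br x1 x3 s2) s4 s5 z) - (cs12 (coad br x2 x4 s1) s3 s5 z) + (cs13 (coad br x2 x4 s1) s3 s5 z) - (ccoad2 x1 x4 s2 s3 s5 z) + (cs12 (coad br x1 x4 s2) s3 s5 z) + (ccoad3 x1 x4 s2 s5 s3 z) - (cs13 (coad br x1 x4 s2) s3 s5 z) + (cb12 (brs s3 s1 s5) x2 x4 z) + (cb12 (brs s4 s1 s3) x2 x5 z) + (cb12 (brs s5 s1 s4) x2 x3 z) + (cb12 s1 (aφ s3 s4 x2) x5 z) + (cb12 s1 (aφ s4 s5 x2) x3 z) + (caφ1 s1 s3 s5 x2 x4 z) + (caφ2 s1 s3 s5 x2 x4 z)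 - (cb12 s1 (aφ s3 s5 x2) x4 z) + (cbrin123 s1 x2 x3 x4 x5 z) + 2 * (cbrin1c2 s1 x2 x3 x4 x5 z) + (cbrin123 s1 x2 x3 x5 x4 z) - (cb12 s1 (br x2 x3 x5) x4 z) - (cbrin123 s1 x2 x3 z x4 x5) - (cbc2 s1 (br x2 x3 z) x4 x5) + (cb12 s1 (br x3 x4 x5) x2 z) + (cbc2 s1 (br x3 x4 x5) x2 z) - (cbrin312 s1 x3 x5 z x2 x4) + (cbrin223 s1 x2 x4 x5 x3 z) - (cbrin223 s1 x2 x4 z x3 x5) + (cb12 s1 (br x2 x4 z) x3 x5) + (cbc2 s1 (br x2 x4 z) x3 x5) - (cbrin323 s1 x2 x5 z x3 x4) - (cbrin123 s2 x1 x3 x4 x5 z) - 2 * (cbrin1c2 s2 x1 x3 x4 x5 z) - (cbrin123 s2 x1 x3 x5 x4 z) + (cb12 s2 (br x1 x3 x5) x4 z) + (cbrin123 s2 x1 x3 z x4 x5) + (cbc2 s2 (br x1 x3 z) x4 x5) - 2 * (cb12 s2 (br x3 x4 x5) x1 z) - (cbc2 s2 (br x3 x4 x5) x1 z) - (cbc2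 s2 (br x4 x5 z) x1 x3) - (cb13 s2 (br x4 x5 z) x1 x3) + (cbc2 s2 (br x3 x5 z) x1 x4) - (cbrin312 s2 x3 x5 z x4 x1) + (cb13 s2 (br x3 x5 z) x1 x4) - (cbc2 s2 (br x3 x4 z) x1 x5) - (cb13 s2 (br x3 x4 z) x1 x5) - (cbrin223 s2 x1 x4 x5 x3 z) + (cbrin223 s2 x1 x4 z x3 x5) - (cb12 s2 (br x1 x4 z) x3 x5) - (cbc2 s2 (br x1 x4 z) x3 x5) + (cbrin323 s2 x1 x5 z x3 x4) - (caφ2 s3 s2 s4 x1 x5 z) + (cb12 s3 (aφ s2 s4 x1) x5 z) + (caφ1 s3 s1 s4 x2 x5 z) + (caφ2 s3 s1 s4 x2 x5 z) - (cb12 s3 (aφ s1 s4 x2) x5 z) + (caφ2 s3 s1 s5 x2 x4 z) - (caφ2 s4 s2 s5 x1 x3 z) + (cb12 s4 (aφ s2 s5 x1) x3 z) + (caφ1 s4 s1 s5 x2 x3 z) + (caφ2 s4 s1 s5 x2 x3 z) - (cb12 s4 (aφ s1 s5 x2) x3 z) + (caφ2 s4 s1 s3 x2 x5 z) - (caφ2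 s5 s2 s3 x1 x4 z) + (cb12 s5 (aφ s2 s3 x1) x4 z) + (caφ1 s5 s1 s3 x2 x4 z) + (caφ2 s5 s1 s3 x2 x4 z) - (cb12 s5 (aφ s1 s3 x2) x4 z) + (caφ2 s5 s1 s4 x2 x3 z)
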